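/- For every z ∈ 𝔻 the representation π_z is uniformly bounded: ‖π_z(g)‖ ≤ 4(1 − |z|)^{−1} for every g ∈ G. In particular, for every compact subset K ⊆ 𝔻, sup{ ‖π_z(g)‖ : g ∈ G, z ∈ K } < ∞. -/

import Mathlib

noncomputable section

open scoped ComplexConjugate

/-- `ℓ²(X)`: the Hilbert space of square-summable complex functions on `X`. -/
abbrev ell2 (X : Type) : Type := lp (fun _ : X => ℂ) 2

/-- The Dirac function `δ_v` at a vertex `v`. -/
noncomputable def delta {X : Type} [DecidableEq X] (v : X) : ell2 X :=
  lp.single 2 v (1 : ℂ)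

/-- `w = √(1 − z²)`, using the principal branch of the square root, which is
holomorphic off the negative real axis and positive on the positive reals. -/
noncomputable def W (z : ℂ) : ℂ := (1 - z ^ 2) ^ ((1 : ℂ) / 2)

/-- The defining property of the edge operator `c_z(x,y)` for adjacent vertices
`x, y`: it sends `δ_x ↦ wδ_x − zδ_y`, `δ_y ↦ wδ_y + zδ_x`, and fixes `δ_v` for
every other vertex `v`. -/
def IsEdgeOp {X : Type} [DecidableEq X] (z : ℂ) (x y : X)
    (A : ell2 X →L[ℂ] ell2 X) : Prop :=
  A (delta x) = W z • delta x - z • delta y ∧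
  A (delta y) = W z • delta y + z • delta x ∧
  ∀ v : X, v ≠ x → v ≠ y → A (delta v) = delta v

/-- The product `f(v₀,v₁) * f(v₁,v₂) * ⋯ * f(v_{n−1},v_n)` along a walk
`v₀, v₁, …, v_n`. -/
def walkProd {X : Type} {T : SimpleGraph X} {E : Type} [Monoid E]
    (f : X → X → E) : {a b : X} → T.Walk a b → E
  | _, _, SimpleGraph.Walk.nil => 1
  | _, _, SimpleGraph.Walk.cons (u := u) (v := v) _ p => f u v * walkProd f p

namespace PZaux


open Finset

variable {X : Type} [DecidableEq X]

local notation "⟪" x ", " y "⟫" => @inner ℂ _ _ x y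

lemma delta_apply (v x : X) : (delta v) x = if x = v then (1:ℂ) else 0 := by
  rw [delta, lp.single_apply]
  by_cases h : x = v
  · subst h; simp
  · simp [h]

lemma inner_delta_left (v : X) (f : ell2 X) : ⟪delta v, f⟫ = f v := by
  rw [delta, lp.inner_single_left]
  simp

lemma inner_delta_right (v : X) (f : ell2 X) : ⟪f, delta v⟫ = conj (f v) := by
  rw [delta, lp.inner_single_right]
  simp

lemma delta_inner_delta (u v : X) : ⟪delta u, delta v⟫ = if u = v then (1:ℂ) else 0 := by
  rw [inner_delta_left, delta_apply]

/-- Norm of a linear combination of distinct deltas. -/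
lemma norm_sum_delta_sq {ι : Type*} (s : Finset ι) (a : ι → X) (l : ι → ℂ)
    (ha : Set.InjOn a s) :
    ‖∑ i ∈ s, l i • delta (a i)‖ ^ 2 = ∑ i ∈ s, ‖l i‖ ^ 2 := by
  classical
  have h : (⟪∑ i ∈ s, l i • delta (a i), ∑ i ∈ s, l i • delta (a i)⟫ : ℂ)
      = ∑ i ∈ s, (conj (l i)) * l i := by
    rw [sum_inner]
    refine Finset.sum_congr rfl fun i hi => ?_
    rw [inner_smul_left, inner_sum]
    calc (starRingEnd ℂ) (l i) * ∑ j ∈ s, ⟪delta (a i), l j • delta (a j)⟫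
        = (starRingEnd ℂ) (l i) * ∑ j ∈ s, if j = i then l i else 0 := by
          congr 1
          refine Finset.sum_congr rfl fun j hj => ?_
          rw [inner_smul_right, delta_inner_delta]
          by_cases hij : j = i
          · subst hij; simp
          · have : ¬ (a i = a j) := fun hc => hij (ha hj hi hc.symm)
            simp [this, hij]
      _ = (conj (l i)) * l i := by rw [Finset.sum_ite_eq' s i (fun _ => l i)]; simp [hi]
  rw [← inner_self_eq_norm_sq (𝕜 := ℂ), h, map_sum]
  refine Finset.sum_congr rfl fun i _ => ?_
  rw [RCLike.conj_mul]
  simp [← Complex.ofReal_pow]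

/-- Bessel-type inequality: sum of squares of finitely many distinct coordinates. -/
lemma sum_coord_sq_le {ι : Type*} (s : Finset ι) (b : ι → X) (f : ell2 X)
    (hb : Set.InjOn b s) :
    ∑ i ∈ s, ‖f (b i)‖ ^ 2 ≤ ‖f‖ ^ 2 := by
  classical
  have horth : Orthonormal ℂ (fun i : {x // x ∈ s} => delta (b i)) := by
    rw [orthonormal_iff_ite]
    intro i j
    rw [delta_inner_delta]
    by_cases hij : i = j
    · simp [hij]
    · have : ¬ (b i.1 = b j.1) := fun hc => hij (Subtype.ext (hb i.2 j.2 hc))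
      simp [this, hij]
  have hb2 := horth.sum_inner_products_le (s := Finset.univ) f
  calc ∑ i ∈ s, ‖f (b i)‖ ^ 2 = ∑ i : {x // x ∈ s}, ‖f (b i.1)‖ ^ 2 := by
        rw [← Finset.sum_coe_sort s fun i => ‖f (b i)‖ ^ 2]
    _ ≤ ‖f‖ ^ 2 := by
        refine le_trans (le_of_eq (Finset.sum_congr rfl fun i _ => ?_)) hb2
        rw [inner_delta_left]


lemma single_eq_smul_delta (v : X) (a : ℂ) : lp.single 2 v a = a • delta v := by
  rw [delta, ← lp.single_smul]
  simp

lemma hasSum_smul_delta (f : ell2 X) : HasSum (fun v => (f v) • delta v) f := by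
  have h := lp.hasSum_single (E := fun _ : X => ℂ) (p := 2) (by norm_num) f
  simpa only [single_eq_smul_delta] using h

lemma clm_ext_delta {A B : ell2 X →L[ℂ] ell2 X} (h : ∀ v, A (delta v) = B (delta v)) : A = B := by
  apply ContinuousLinearMap.ext
  intro f
  have hf := hasSum_smul_delta f
  have hA := hf.mapL A
  have hB := hf.mapL B
  simp only [map_smul] at hA hB
  simp only [h] at hA
  exact hA.unique hB

lemma norm_le_of_hasSum_partial {ι : Type} {F : ι → ell2 X} {x : ell2 X} (h : HasSum F x) (M : ℝ)
    (hM : ∀ s : Finset ι, ‖∑ i ∈ s, F i‖ ≤ M) : ‖x‖ ≤ M :=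
  le_of_tendsto h.norm (Filter.Eventually.of_forall hM)

lemma norm_permOp_le (gact : X → X) (hinj : Function.Injective gact)
    (Ug : ell2 X →L[ℂ] ell2 X) (hUg : ∀ v, Ug (delta v) = delta (gact v)) (f : ell2 X) :
    ‖Ug f‖ ≤ ‖f‖ := by
  have hf := (hasSum_smul_delta f).mapL Ug
  simp only [map_smul, hUg] at hf
  refine norm_le_of_hasSum_partial hf _ (fun s => ?_)
  have h1 : ‖∑ v ∈ s, (f v) • delta (gact v)‖^2 = ∑ v ∈ s, ‖(f v : ℂ)‖^2 :=
    norm_sum_delta_sq s gact _ (hinj.injOn)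
  have h2 : ∑ v ∈ s, ‖(f v : ℂ)‖^2 ≤ ‖f‖^2 := sum_coord_sq_le s id f (Set.injOn_id _)
  nlinarith [norm_nonneg (∑ v ∈ s, (f v) • delta (gact v)), norm_nonneg f]





open SimpleGraph Finset

variable {X : Type} [DecidableEq X] {T : SimpleGraph X}

@[simp] lemma walkProd_nil {E : Type} [Monoid E] (f : X → X → E) {a : X} :
    walkProd (T := T) f (SimpleGraph.Walk.nil (u := a)) = 1 := rfl

@[simp] lemma walkProd_cons {E : Type} [Monoid E] (f : X → X → E) {a v b : X}
    (h : T.Adj a v) (q : T.Walk v b) :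
    walkProd f (SimpleGraph.Walk.cons h q) = f a v * walkProd f q := rfl

lemma getVert_mem_support {a b : X} (q : T.Walk a b) {m : ℕ} (hm : m ≤ q.length) :
    q.getVert m ∈ q.support :=
  SimpleGraph.Walk.mem_support_iff_exists_getVert.mpr ⟨m, rfl, hm⟩

lemma getVert_injOn {a b : X} (p : T.Walk a b) (hp : p.IsPath) :
    ∀ i ≤ p.length, ∀ j ≤ p.length, p.getVert i = p.getVert j → i = j := by
  revert hp
  induction p with
  | nil => intro _ i hi j hj _; simp only [SimpleGraph.Walk.length_nil, Nat.le_zero] at hi hj; omega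
  | cons h q ih =>
    intro hp
    rw [SimpleGraph.Walk.cons_isPath_iff] at hp
    obtain ⟨hq, hu⟩ := hp
    intro i hi j hj heq
    rw [SimpleGraph.Walk.length_cons] at hi hj
    match i, j with
    | 0, 0 => rfl
    | 0, j'+1 =>
      exfalso
      rw [SimpleGraph.Walk.getVert_zero, SimpleGraph.Walk.getVert_cons_succ] at heq
      exact hu (heq ▸ getVert_mem_support q (by omega))
    | i'+1, 0 =>
      exfalso
      rw [SimpleGraph.Walk.getVert_zero, SimpleGraph.Walk.getVert_cons_succ] at heq
      exact hu (heq ▸ getVert_mem_support q (by omega))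
    | i'+1, j'+1 =>
      rw [SimpleGraph.Walk.getVert_cons_succ, SimpleGraph.Walk.getVert_cons_succ] at heq
      have := ih hq i' (by omega) j' (by omega) heq
      omega

lemma walkProd_delta (z : ℂ)
    (c : X → X → (ell2 X →L[ℂ] ell2 X))
    (hedge : ∀ u v : X, T.Adj u v → IsEdgeOp z u v (c u v))
    {a b : X} (p : T.Walk a b) (hp : p.IsPath) :
    (∀ x, x ∉ p.support → walkProd c p (delta x) = delta x) ∧
    (∀ k < p.length, walkProd c p (delta (p.getVert k)) =
        (-z) • delta (p.getVert (k+1))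
        + (W z)^2 • ∑ j ∈ Finset.range k, z^(k-1-j) • delta (p.getVert (j+1))
        + (W z * z^k) • delta a) ∧
    (walkProd c p (delta b) =
        W z • ∑ j ∈ Finset.range p.length, z^(p.length-1-j) • delta (p.getVert (j+1))
        + (z^p.length) • delta a) := by
  revert hp
  induction p with
  | nil =>
    intro _
    refine ⟨fun x _ => by simp, fun k hk => by simp at hk, by simp⟩
  | cons h q ih =>
    intro hp
    rw [SimpleGraph.Walk.cons_isPath_iff] at hp
    obtain ⟨hq, hu⟩ := hp
    obtain ⟨ih1, ih2, ih3⟩ := ih hq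
    obtain ⟨e1, e2, e3⟩ := hedge _ _ h
    rename_i u v w
    have hfix : ∀ m, 1 ≤ m → m ≤ q.length →
        (c u v) (delta (q.getVert m)) = delta (q.getVert m) := by
      intro m h1 h2
      refine e3 _ (fun hc => hu (hc ▸ getVert_mem_support q h2)) (fun hc => ?_)
      have : q.getVert 0 = v := q.getVert_zero
      have := getVert_injOn q hq m h2 0 (by omega) (by rw [hc, this])
      omega
    refine ⟨?_, ?_, ?_⟩
    · intro x hx
      rw [SimpleGraph.Walk.support_cons, List.mem_cons] at hx
      push_neg at hx
      rw [walkProd_cons, ContinuousLinearMap.mul_apply, ih1 x hx.2]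
      exact e3 x hx.1 (fun hc => hx.2 (hc ▸ q.start_mem_support))
    · intro k hk
      rw [SimpleGraph.Walk.length_cons] at hk
      match k with
      | 0 =>
        rw [SimpleGraph.Walk.getVert_zero, walkProd_cons, ContinuousLinearMap.mul_apply,
          ih1 u hu, e1, SimpleGraph.Walk.getVert_cons_succ (n := 0), SimpleGraph.Walk.getVert_zero]
        simp only [Finset.range_zero, Finset.sum_empty, smul_zero, pow_zero, mul_one]
        module
      | m+1 =>
        have hm : m < q.length := by omega
        rw [SimpleGraph.Walk.getVert_cons_succ, walkProd_cons, ContinuousLinearMap.mul_apply,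
          ih2 m hm]
        rw [map_add, map_add, map_smul, map_smul, map_smul, map_sum]
        have hsum : ∀ j ∈ Finset.range m,
            (c u v) (z^(m-1-j) • delta (q.getVert (j+1))) = z^(m-1-j) • delta (q.getVert (j+1)) := by
          intro j hj
          rw [Finset.mem_range] at hj
          rw [map_smul, hfix (j+1) (by omega) (by omega)]
        rw [Finset.sum_congr rfl hsum, hfix (m+1) (by omega) (by omega), e2]
        -- now rewrite the target
        have htgt : ∀ j : ℕ, delta ((SimpleGraph.Walk.cons h q).getVert (j+1)) = delta (q.getVert j) := by
          intro j; rw [SimpleGraph.Walk.getVert_cons_succ]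
        simp only [htgt, Nat.add_sub_cancel]
        rw [Finset.sum_range_succ' (fun j => z^(m-j) • delta (q.getVert j)) m]
        have hexp : ∀ j ∈ Finset.range m,
            z^(m-(j+1)) • delta (q.getVert (j+1)) = z^(m-1-j) • delta (q.getVert (j+1)) := by
          intro j hj
          congr 2
          omega
        rw [Finset.sum_congr rfl hexp, Nat.sub_zero, q.getVert_zero]
        module
    · rw [walkProd_cons, ContinuousLinearMap.mul_apply, ih3]
      rw [map_add, map_smul, map_smul, map_sum]
      have hsum : ∀ j ∈ Finset.range q.length,
          (c u v) (z^(q.length-1-j) • delta (q.getVert (j+1)))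
            = z^(q.length-1-j) • delta (q.getVert (j+1)) := by
        intro j hj
        rw [Finset.mem_range] at hj
        rw [map_smul, hfix (j+1) (by omega) (by omega)]
      rw [Finset.sum_congr rfl hsum, e2]
      have htgt : ∀ j : ℕ, delta ((SimpleGraph.Walk.cons h q).getVert (j+1)) = delta (q.getVert j) := by
        intro j; rw [SimpleGraph.Walk.getVert_cons_succ]
      rw [SimpleGraph.Walk.length_cons]
      simp only [htgt, Nat.add_sub_cancel]
      rw [Finset.sum_range_succ' (fun j => z^(q.length-j) • delta (q.getVert j)) q.length]
      have hexp : ∀ j ∈ Finset.range q.length,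
          z^(q.length-(j+1)) • delta (q.getVert (j+1)) = z^(q.length-1-j) • delta (q.getVert (j+1)) := by
        intro j hj
        congr 2
        omega
      rw [Finset.sum_congr rfl hexp, Nat.sub_zero, q.getVert_zero]
      module


lemma le_of_sq_le {x y : ℝ} (hy : 0 ≤ y) (h : x^2 ≤ y^2) : x ≤ y := by
  nlinarith [sq_nonneg (x - y), sq_nonneg (x + y)]

lemma geom_le {r : ℝ} (h0 : 0 ≤ r) (h1 : r < 1) (N : ℕ) :
    ∑ i ∈ Finset.range N, r^i ≤ (1 - r)⁻¹ := by
  have h2 : (0:ℝ) < 1 - r := by linarith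
  rw [geom_sum_eq (by intro hc; rw [hc] at h1; exact lt_irrefl 1 h1) N]
  rw [div_le_iff_of_neg (by linarith : r - 1 < 0)]
  have h3 : (1 - r)⁻¹ * (r - 1) = -1 := by field_simp; ring
  rw [h3]
  have hrN : 0 ≤ r^N := pow_nonneg h0 N
  linarith

lemma normW_sq_le {z : ℂ} (hz : ‖z‖ < 1) : ‖W z‖^2 ≤ 2 := by
  have hne : (1 : ℂ) - z^2 ≠ 0 := by
    intro hc
    have h1 : z^2 = 1 := by linear_combination -hc
    have h2 : ‖z^2‖ = 1 := by rw [h1, norm_one]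
    rw [norm_pow] at h2
    nlinarith [norm_nonneg z]
  have habs : ‖W z‖ = ‖(1:ℂ) - z^2‖ ^ ((1:ℝ)/2) := by
    rw [W, Complex.norm_cpow_of_ne_zero hne]
    norm_num
  have hb : ‖(1:ℂ) - z^2‖ ≤ 2 := by
    calc ‖(1:ℂ) - z^2‖ ≤ ‖(1:ℂ)‖ + ‖z^2‖ := norm_sub_le _ _
      _ ≤ 2 := by rw [norm_one, norm_pow]; nlinarith [norm_nonneg z]
  have h0 : (0:ℝ) ≤ ‖(1:ℂ) - z^2‖ := norm_nonneg _
  rw [habs, ← Real.rpow_natCast (‖(1:ℂ) - z^2‖ ^ ((1:ℝ)/2)) 2, ← Real.rpow_mul h0]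
  norm_num
  exact hb

lemma normW_le {z : ℂ} (hz : ‖z‖ < 1) : ‖W z‖ ≤ 2 := by
  have := normW_sq_le hz
  nlinarith [norm_nonneg (W z)]

/-- The purely algebraic rearrangement of the expanded walk product. -/
lemma rearrange (n : ℕ) (z w : ℂ) (g : ℕ → ℂ) (d : ℕ → ell2 X) :
    (∑ k ∈ Finset.range n, g k • ((-z) • d (k+1)
        + w^2 • ∑ j ∈ Finset.range k, z^(k-1-j) • d (j+1) + (w * z^k) • d 0))
    + g n • (w • ∑ j ∈ Finset.range n, z^(n-1-j) • d (j+1) + z^n • d 0)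
    = (∑ k ∈ Finset.range n, (-(g k * z)) • d (k+1))
    + ∑ m ∈ Finset.range (n+1), (if m = 0 then (∑ k ∈ Finset.range n, g k * (w * z^k)) + g n * z^n
        else w^2 * (∑ k ∈ Finset.Ico m n, g k * z^(k-m)) + g n * (w * z^(n-m))) • d m := by
  classical
  rw [Finset.sum_range_succ'
    (fun m => (if m = 0 then (∑ k ∈ Finset.range n, g k * (w * z^k)) + g n * z^n
        else w^2 * (∑ k ∈ Finset.Ico m n, g k * z^(k-m)) + g n * (w * z^(n-m))) • d m) n]
  simp only [Nat.succ_ne_zero, ite_false, ite_true, reduceIte]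
  -- expand the LHS sum termwise
  have hL2 : ∀ k ∈ Finset.range n,
      g k • ((-z) • d (k+1) + w^2 • ∑ j ∈ Finset.range k, z^(k-1-j) • d (j+1) + (w * z^k) • d 0)
      = (-(g k * z)) • d (k+1)
        + (∑ j ∈ Finset.range k, (w^2 * (g k * z^(k-1-j))) • d (j+1))
        + (g k * (w * z^k)) • d 0 := by
    intro k _
    have hmid : g k • (w^2 • ∑ j ∈ Finset.range k, z^(k-1-j) • d (j+1))
        = ∑ j ∈ Finset.range k, (w^2 * (g k * z^(k-1-j))) • d (j+1) := by
      rw [smul_smul, Finset.smul_sum]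
      refine Finset.sum_congr rfl fun j _ => ?_
      rw [smul_smul]
      congr 1
      ring
    rw [smul_add, smul_add, hmid, smul_smul, smul_smul]
    congr 2
    · congr 1
      ring
  rw [Finset.sum_congr rfl hL2, Finset.sum_add_distrib, Finset.sum_add_distrib]
  -- swap the double sum
  have hswap : ∑ k ∈ Finset.range n, ∑ j ∈ Finset.range k, (w^2 * (g k * z^(k-1-j))) • d (j+1)
      = ∑ m ∈ Finset.range n, ∑ k ∈ Finset.Ico (m+1) n, (w^2 * (g k * z^(k-1-m))) • d (m+1) := by
    have h1 := Finset.sum_Ico_Ico_comm' 0 n (fun i j => (w^2 * (g j * z^(j-1-i))) • d (i+1))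
    rw [← Finset.range_eq_Ico] at h1
    exact Eq.trans (Finset.sum_congr rfl fun k _ => by rw [Finset.range_eq_Ico]) h1.symm
  rw [hswap]
  -- expand the last LHS term
  have hL4 : g n • (w • ∑ j ∈ Finset.range n, z^(n-1-j) • d (j+1) + z^n • d 0)
      = (∑ j ∈ Finset.range n, (g n * (w * z^(n-1-j))) • d (j+1)) + (g n * z^n) • d 0 := by
    have hmid : g n • (w • ∑ j ∈ Finset.range n, z^(n-1-j) • d (j+1))
        = ∑ j ∈ Finset.range n, (g n * (w * z^(n-1-j))) • d (j+1) := by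
      rw [smul_smul, Finset.smul_sum]
      refine Finset.sum_congr rfl fun j _ => ?_
      rw [smul_smul]
      congr 1
      ring
    rw [smul_add, hmid, smul_smul]
  rw [hL4]
  -- split the RHS coefficients
  have hR : ∀ m ∈ Finset.range n,
      (w^2 * (∑ k ∈ Finset.Ico (m+1) n, g k * z^(k-(m+1))) + g n * (w * z^(n-(m+1)))) • d (m+1)
      = (∑ k ∈ Finset.Ico (m+1) n, (w^2 * (g k * z^(k-1-m))) • d (m+1))
        + (g n * (w * z^(n-1-m))) • d (m+1) := by
    intro m _
    rw [add_smul, Finset.mul_sum, Finset.sum_smul]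
    congr 1
    · refine Finset.sum_congr rfl fun k _ => ?_
      rw [show k - (m+1) = k - 1 - m by omega]
    · rw [show n - (m+1) = n - 1 - m by omega]
  rw [Finset.sum_congr rfl hR, Finset.sum_add_distrib]
  -- split the RHS 0-coefficient
  rw [add_smul, Finset.sum_smul]
  abel


lemma support_toFinset_eq {a b : X} (p : T.Walk a b) :
    p.support.toFinset = (Finset.range (p.length+1)).image p.getVert := by
  ext x
  simp only [List.mem_toFinset, SimpleGraph.Walk.mem_support_iff_exists_getVert,
    Finset.mem_image, Finset.mem_range, Nat.lt_succ_iff]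
  constructor
  · rintro ⟨k, hk1, hk2⟩; exact ⟨k, hk2, hk1⟩
  · rintro ⟨k, hk1, hk2⟩; exact ⟨k, hk2, hk1⟩

lemma expansion (P : ell2 X →L[ℂ] ell2 X) {a b : X} (p : T.Walk a b) (hp : p.IsPath)
    (hfixoff : ∀ x, x ∉ p.support → P (delta x) = delta x) (f : ell2 X) :
    P f = f + ∑ k ∈ Finset.range (p.length+1),
      (f (p.getVert k)) • (P (delta (p.getVert k)) - delta (p.getVert k)) := by
  classical
  have hs := (hasSum_smul_delta f).mapL P
  simp only [map_smul] at hs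
  have hH : ∀ v ∉ p.support.toFinset, (f v) • (P (delta v) - delta v) = 0 := by
    intro v hv
    rw [hfixoff v (by simpa [List.mem_toFinset] using hv), sub_self, smul_zero]
  have hHsum : HasSum (fun v => (f v) • (P (delta v) - delta v))
      (∑ v ∈ p.support.toFinset, (f v) • (P (delta v) - delta v)) :=
    hasSum_sum_of_ne_finset_zero hH
  have hsplit : (fun v => (f v) • P (delta v))
      = fun v => (f v) • delta v + (f v) • (P (delta v) - delta v) := by
    funext v
    rw [smul_sub]
    abel
  rw [hsplit] at hs
  have huniq := ((hasSum_smul_delta f).add hHsum).unique hs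
  rw [← huniq]
  congr 1
  rw [support_toFinset_eq p, Finset.sum_image]
  intro x hx y hy hxy
  exact getVert_injOn p hp x (Nat.lt_succ_iff.mp (Finset.mem_range.mp hx))
    y (Nat.lt_succ_iff.mp (Finset.mem_range.mp hy)) hxy

lemma injOn_getVert {a b : X} (p : T.Walk a b) (hp : p.IsPath) (t : ℕ)
    (s : Finset ℕ) (hs : ∀ k ∈ s, k + t ≤ p.length) :
    Set.InjOn (fun k => p.getVert (k + t)) s := by
  intro i hi j hj hij
  have := getVert_injOn p hp (i+t) (hs i (Finset.mem_coe.mp hi)) (j+t) (hs j (Finset.mem_coe.mp hj)) hij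
  omega

set_option maxHeartbeats 2000000 in
lemma walkProd_norm_apply_le (z : ℂ) (hz : ‖z‖ < 1)
    (c : X → X → (ell2 X →L[ℂ] ell2 X))
    (hedge : ∀ u v : X, T.Adj u v → IsEdgeOp z u v (c u v))
    {a b : X} (p : T.Walk a b) (hp : p.IsPath) (f : ell2 X) :
    ‖walkProd c p f‖ ≤ (4 * (1 - ‖z‖)⁻¹) * ‖f‖ := by
  classical
  obtain ⟨h1, h2, h3⟩ := walkProd_delta z c hedge p hp
  set n := p.length with hn
  set r := ‖z‖ with hr
  have hr0 : 0 ≤ r := norm_nonneg z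
  have hr1 : r < 1 := hz
  have hinv1 : (0:ℝ) < 1 - r := by linarith
  have hinvpos : (0:ℝ) ≤ (1-r)⁻¹ := inv_nonneg.mpr hinv1.le
  have hinvge1 : (1:ℝ) ≤ (1-r)⁻¹ := by
    rw [le_inv_comm₀ one_pos hinv1]
    linarith
  have hW2 := normW_sq_le hz
  have hW1 := normW_le hz
  -- the decomposition of P f
  have hPf : walkProd c p f
      = (f - ∑ k ∈ Finset.range (n+1), (f (p.getVert k)) • delta (p.getVert k))
      + ((∑ k ∈ Finset.range n, (-((f (p.getVert k)) * z)) • delta (p.getVert (k+1)))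
      + ∑ m ∈ Finset.range (n+1),
          (if m = 0 then (∑ k ∈ Finset.range n, (f (p.getVert k)) * (W z * z^k))
              + (f (p.getVert n)) * z^n
            else (W z)^2 * (∑ k ∈ Finset.Ico m n, (f (p.getVert k)) * z^(k-m))
              + (f (p.getVert n)) * (W z * z^(n-m))) • delta (p.getVert m)) := by
    rw [expansion (walkProd c p) p hp h1 f]
    have e0 : ∀ k ∈ Finset.range (n+1),
        (f (p.getVert k)) • (walkProd c p (delta (p.getVert k)) - delta (p.getVert k))
        = (f (p.getVert k)) • walkProd c p (delta (p.getVert k))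
          - (f (p.getVert k)) • delta (p.getVert k) := fun k _ => smul_sub _ _ _
    rw [Finset.sum_congr rfl e0, Finset.sum_sub_distrib]
    have hkey := rearrange n z (W z) (fun k => f (p.getVert k))
      (fun m => delta (p.getVert m))
    simp only [] at hkey
    rw [Finset.sum_range_succ (fun k => (f (p.getVert k)) • walkProd c p (delta (p.getVert k))) n]
    have e2 : ∀ k ∈ Finset.range n,
        (f (p.getVert k)) • walkProd c p (delta (p.getVert k))
        = (f (p.getVert k)) • ((-z) • delta (p.getVert (k+1))
          + (W z)^2 • ∑ j ∈ Finset.range k, z^(k-1-j) • delta (p.getVert (j+1))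
          + (W z * z^k) • delta (p.getVert 0)) := by
      intro k hk
      rw [h2 k (Finset.mem_range.mp hk), p.getVert_zero]
    have e3 : (f (p.getVert n)) • walkProd c p (delta (p.getVert n))
        = (f (p.getVert n)) • (W z • ∑ j ∈ Finset.range n, z^(n-1-j) • delta (p.getVert (j+1))
          + z^n • delta (p.getVert 0)) := by
      rw [show p.getVert n = b from p.getVert_length, h3, p.getVert_zero]
    rw [Finset.sum_congr rfl e2, e3, hkey]
    abel
  rw [hPf]
  -- bounds on coordinates
  have hsumg : ∑ k ∈ Finset.range (n+1), ‖f (p.getVert k)‖^2 ≤ ‖f‖^2 := by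
    refine sum_coord_sq_le _ _ f ?_
    intro i hi j hj hij
    exact getVert_injOn p hp i (Nat.lt_succ_iff.mp (Finset.mem_range.mp hi))
      j (Nat.lt_succ_iff.mp (Finset.mem_range.mp hj)) hij
  -- bound for f₀
  have hf0 : ‖f - ∑ k ∈ Finset.range (n+1), (f (p.getVert k)) • delta (p.getVert k)‖ ≤ ‖f‖ := by
    have hinner : (inner ℂ f (∑ k ∈ Finset.range (n+1), (f (p.getVert k)) • delta (p.getVert k)) : ℂ)
        = ∑ k ∈ Finset.range (n+1), (‖f (p.getVert k)‖:ℂ)^2 := by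
      rw [inner_sum]
      refine Finset.sum_congr rfl fun k _ => ?_
      rw [inner_smul_right, inner_delta_right, mul_comm, RCLike.conj_mul]
      norm_cast
    have hs2 : ‖∑ k ∈ Finset.range (n+1), (f (p.getVert k)) • delta (p.getVert k)‖^2
        = ∑ k ∈ Finset.range (n+1), ‖f (p.getVert k)‖^2 := by
      refine norm_sum_delta_sq _ _ _ ?_
      intro i hi j hj hij
      exact getVert_injOn p hp i (Nat.lt_succ_iff.mp (Finset.mem_range.mp hi))
        j (Nat.lt_succ_iff.mp (Finset.mem_range.mp hj)) hij
    have hns := norm_sub_sq (𝕜 := ℂ) f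
      (∑ k ∈ Finset.range (n+1), (f (p.getVert k)) • delta (p.getVert k))
    rw [hinner, hs2] at hns
    have hre : RCLike.re (∑ k ∈ Finset.range (n+1), (‖f (p.getVert k)‖:ℂ)^2)
        = ∑ k ∈ Finset.range (n+1), ‖f (p.getVert k)‖^2 := by
      rw [map_sum]
      refine Finset.sum_congr rfl fun k _ => ?_
      norm_cast
    rw [hre] at hns
    have hpos : 0 ≤ ∑ k ∈ Finset.range (n+1), ‖f (p.getVert k)‖^2 :=
      Finset.sum_nonneg fun k _ => sq_nonneg _
    refine le_of_sq_le (norm_nonneg f) ?_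
    rw [hns]
    linarith
  -- bound for A
  have hA : ‖∑ k ∈ Finset.range n, (-((f (p.getVert k)) * z)) • delta (p.getVert (k+1))‖
      ≤ ‖f‖ := by
    have hA2 : ‖∑ k ∈ Finset.range n, (-((f (p.getVert k)) * z)) • delta (p.getVert (k+1))‖^2
        = ∑ k ∈ Finset.range n, ‖-((f (p.getVert k)) * z)‖^2 := by
      refine norm_sum_delta_sq _ _ _ ?_
      have := injOn_getVert p hp 1 (Finset.range n)
        (fun k hk => by have := Finset.mem_range.mp hk; omega)
      simpa using this
    refine le_of_sq_le (norm_nonneg f) ?_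
    rw [hA2]
    have hterm : ∀ k ∈ Finset.range n, ‖-((f (p.getVert k)) * z)‖^2 ≤ ‖f (p.getVert k)‖^2 := by
      intro k _
      rw [norm_neg, norm_mul, ← hr]
      have hr2 : r^2 ≤ 1 := by nlinarith
      nlinarith [sq_nonneg (‖f (p.getVert k)‖),
        mul_nonneg (sq_nonneg (‖f (p.getVert k)‖)) (sub_nonneg.mpr hr2)]
    calc ∑ k ∈ Finset.range n, ‖-((f (p.getVert k)) * z)‖^2
        ≤ ∑ k ∈ Finset.range n, ‖f (p.getVert k)‖^2 := Finset.sum_le_sum hterm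
      _ ≤ ∑ k ∈ Finset.range (n+1), ‖f (p.getVert k)‖^2 :=
          Finset.sum_le_sum_of_subset_of_nonneg
            (Finset.range_subset_range.mpr (by omega)) (fun k _ _ => sq_nonneg _)
      _ ≤ ‖f‖^2 := hsumg
  -- bound for B
  have hB : ‖∑ m ∈ Finset.range (n+1),
      (if m = 0 then (∑ k ∈ Finset.range n, (f (p.getVert k)) * (W z * z^k))
          + (f (p.getVert n)) * z^n
        else (W z)^2 * (∑ k ∈ Finset.Ico m n, (f (p.getVert k)) * z^(k-m))
          + (f (p.getVert n)) * (W z * z^(n-m))) • delta (p.getVert m)‖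
      ≤ 2 * (1-r)⁻¹ * ‖f‖ := by
    set C : ℕ → ℂ := fun m =>
      if m = 0 then (∑ k ∈ Finset.range n, (f (p.getVert k)) * (W z * z^k))
          + (f (p.getVert n)) * z^n
        else (W z)^2 * (∑ k ∈ Finset.Ico m n, (f (p.getVert k)) * z^(k-m))
          + (f (p.getVert n)) * (W z * z^(n-m)) with hC
    have hB2 : ‖∑ m ∈ Finset.range (n+1), C m • delta (p.getVert m)‖^2
        = ∑ m ∈ Finset.range (n+1), ‖C m‖^2 := by
      refine norm_sum_delta_sq _ _ _ ?_
      intro i hi j hj hij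
      exact getVert_injOn p hp i (Nat.lt_succ_iff.mp (Finset.mem_range.mp hi))
        j (Nat.lt_succ_iff.mp (Finset.mem_range.mp hj)) hij
    -- columnwise bound
    have hCb : ∀ m ∈ Finset.range (n+1),
        ‖C m‖ ≤ 2 * ∑ k ∈ Finset.Ico m (n+1), r^(k-m) * ‖f (p.getVert k)‖ := by
      intro m hm
      have hmn : m ≤ n := Nat.lt_succ_iff.mp (Finset.mem_range.mp hm)
      by_cases hm0 : m = 0
      · subst hm0
        rw [hC]
        simp only [if_pos rfl]
        calc ‖(∑ k ∈ Finset.range n, (f (p.getVert k)) * (W z * z^k))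
              + (f (p.getVert n)) * z^n‖
            ≤ ‖∑ k ∈ Finset.range n, (f (p.getVert k)) * (W z * z^k)‖
              + ‖(f (p.getVert n)) * z^n‖ := norm_add_le _ _
          _ ≤ (∑ k ∈ Finset.range n, ‖(f (p.getVert k)) * (W z * z^k)‖)
              + ‖(f (p.getVert n)) * z^n‖ := by
              gcongr
              exact norm_sum_le _ _
          _ ≤ (∑ k ∈ Finset.range n, 2 * (r^(k-0) * ‖f (p.getVert k)‖))
              + 2 * (r^(n-0) * ‖f (p.getVert n)‖) := by
              gcongr with k hk
              · rw [norm_mul, norm_mul, norm_pow, ← hr, Nat.sub_zero]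
                refine le_trans (mul_le_mul_of_nonneg_left
                  (mul_le_mul_of_nonneg_right hW1 (pow_nonneg hr0 k))
                  (norm_nonneg (f (p.getVert k)))) (le_of_eq (by ring))
              · rw [norm_mul, norm_pow, ← hr, Nat.sub_zero]
                have hh := mul_nonneg (pow_nonneg hr0 n) (norm_nonneg (f (p.getVert n)))
                nlinarith [hh]
          _ = 2 * ∑ k ∈ Finset.Ico 0 (n+1), r^(k-0) * ‖f (p.getVert k)‖ := by
              rw [← Finset.range_eq_Ico, Finset.sum_range_succ
                (fun k => r^(k-0) * ‖f (p.getVert k)‖) n, mul_add, Finset.mul_sum]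
      · rw [hC]
        simp only [if_neg hm0]
        calc ‖(W z)^2 * (∑ k ∈ Finset.Ico m n, (f (p.getVert k)) * z^(k-m))
              + (f (p.getVert n)) * (W z * z^(n-m))‖
            ≤ ‖(W z)^2‖ * ‖∑ k ∈ Finset.Ico m n, (f (p.getVert k)) * z^(k-m)‖
              + ‖(f (p.getVert n)) * (W z * z^(n-m))‖ := by
              refine le_trans (norm_add_le _ _) ?_
              rw [norm_mul]
          _ ≤ 2 * (∑ k ∈ Finset.Ico m n, r^(k-m) * ‖f (p.getVert k)‖)
              + 2 * (r^(n-m) * ‖f (p.getVert n)‖) := by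
              have hs1 : ‖∑ k ∈ Finset.Ico m n, (f (p.getVert k)) * z^(k-m)‖
                  ≤ ∑ k ∈ Finset.Ico m n, r^(k-m) * ‖f (p.getVert k)‖ := by
                refine le_trans (norm_sum_le _ _) ?_
                refine Finset.sum_le_sum fun k _ => ?_
                rw [norm_mul, norm_pow, ← hr, mul_comm]
              have hw2 : ‖(W z)^2‖ ≤ 2 := by
                rw [norm_pow]
                exact hW2
              have hs1nn : (0:ℝ) ≤ ∑ k ∈ Finset.Ico m n, r^(k-m) * ‖f (p.getVert k)‖ :=
                Finset.sum_nonneg fun k _ =>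
                  mul_nonneg (pow_nonneg hr0 _) (norm_nonneg _)
              have ht2 : ‖(f (p.getVert n)) * (W z * z^(n-m))‖
                  ≤ 2 * (r^(n-m) * ‖f (p.getVert n)‖) := by
                rw [norm_mul, norm_mul, norm_pow, ← hr]
                refine le_trans (mul_le_mul_of_nonneg_left
                  (mul_le_mul_of_nonneg_right hW1 (pow_nonneg hr0 (n-m)))
                  (norm_nonneg (f (p.getVert n)))) (le_of_eq (by ring))
              linarith [mul_le_mul_of_nonneg_left hs1 (norm_nonneg ((W z)^2)),
                mul_le_mul_of_nonneg_right hw2 hs1nn]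
          _ = 2 * ∑ k ∈ Finset.Ico m (n+1), r^(k-m) * ‖f (p.getVert k)‖ := by
              rw [Finset.sum_Ico_succ_top hmn]
              ring
    -- geometric sums
    have hgeo : ∀ m : ℕ, ∑ k ∈ Finset.Ico m (n+1), r^(k-m) ≤ (1-r)⁻¹ := by
      intro m
      by_cases hmn : m ≤ n+1
      · rw [Finset.sum_Ico_eq_sum_range]
        have : ∀ i ∈ Finset.range (n+1-m), r^(m+i-m) = r^i := by
          intro i _
          congr 1
          omega
        rw [Finset.sum_congr rfl this]
        exact geom_le hr0 hr1 _
      · rw [Finset.Ico_eq_empty (by omega)]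
        simp [hinvpos]
    -- Cauchy-Schwarz per column
    have hCS : ∀ m ∈ Finset.range (n+1),
        (∑ k ∈ Finset.Ico m (n+1), r^(k-m) * ‖f (p.getVert k)‖)^2
        ≤ (1-r)⁻¹ * ∑ k ∈ Finset.Ico m (n+1), r^(k-m) * ‖f (p.getVert k)‖^2 := by
      intro m _
      have hcs := Finset.sum_mul_sq_le_sq_mul_sq (Finset.Ico m (n+1))
        (fun k => Real.sqrt (r^(k-m))) (fun k => Real.sqrt (r^(k-m)) * ‖f (p.getVert k)‖)
      have he1 : ∀ k ∈ Finset.Ico m (n+1),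
          Real.sqrt (r^(k-m)) * (Real.sqrt (r^(k-m)) * ‖f (p.getVert k)‖)
          = r^(k-m) * ‖f (p.getVert k)‖ := by
        intro k _
        rw [← mul_assoc, Real.mul_self_sqrt (pow_nonneg hr0 _)]
      have he2 : ∀ k ∈ Finset.Ico m (n+1), Real.sqrt (r^(k-m))^2 = r^(k-m) := by
        intro k _
        exact Real.sq_sqrt (pow_nonneg hr0 _)
      have he3 : ∀ k ∈ Finset.Ico m (n+1),
          (Real.sqrt (r^(k-m)) * ‖f (p.getVert k)‖)^2 = r^(k-m) * ‖f (p.getVert k)‖^2 := by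
        intro k _
        rw [mul_pow, Real.sq_sqrt (pow_nonneg hr0 _)]
      rw [Finset.sum_congr rfl he1, Finset.sum_congr rfl he2, Finset.sum_congr rfl he3] at hcs
      refine le_trans hcs ?_
      have hgnn : (0:ℝ) ≤ ∑ k ∈ Finset.Ico m (n+1), r^(k-m) * ‖f (p.getVert k)‖^2 :=
        Finset.sum_nonneg fun k _ => mul_nonneg (pow_nonneg hr0 _) (sq_nonneg _)
      exact mul_le_mul_of_nonneg_right (hgeo m) hgnn
    -- sum over columns, swap order
    have hswap : ∑ m ∈ Finset.range (n+1), ∑ k ∈ Finset.Ico m (n+1),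
          r^(k-m) * ‖f (p.getVert k)‖^2
        = ∑ k ∈ Finset.range (n+1), ∑ m ∈ Finset.range (k+1),
          r^(k-m) * ‖f (p.getVert k)‖^2 := by
      have h := Finset.sum_Ico_Ico_comm 0 (n+1)
        (fun m k => r^(k-m) * ‖f (p.getVert k)‖^2)
      rw [← Finset.range_eq_Ico] at h
      exact h.trans (Finset.sum_congr rfl fun k _ => by rw [Finset.range_eq_Ico])
    have hinner : ∀ k ∈ Finset.range (n+1),
        ∑ m ∈ Finset.range (k+1), r^(k-m) * ‖f (p.getVert k)‖^2
        ≤ (1-r)⁻¹ * ‖f (p.getVert k)‖^2 := by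
      intro k _
      rw [← Finset.sum_mul]
      refine mul_le_mul_of_nonneg_right ?_ (sq_nonneg _)
      have hrefl := Finset.sum_range_reflect (fun i => r^i) (k+1)
      have : ∀ j ∈ Finset.range (k+1), r^(k+1-1-j) = r^(k-j) := by
        intro j _
        have h : k+1-1-j = k-j := by omega
        rw [h]
      rw [Finset.sum_congr rfl this] at hrefl
      rw [hrefl]
      exact geom_le hr0 hr1 _
    -- put it together
    have hBsq : ∑ m ∈ Finset.range (n+1), ‖C m‖^2
        ≤ 4 * ((1-r)⁻¹ * ((1-r)⁻¹ * ‖f‖^2)) := by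
      have step1 : ∀ m ∈ Finset.range (n+1), ‖C m‖^2
          ≤ 4 * ((1-r)⁻¹ * ∑ k ∈ Finset.Ico m (n+1), r^(k-m) * ‖f (p.getVert k)‖^2) := by
        intro m hm
        have h1' := hCb m hm
        have h2' := hCS m hm
        have hDnn : (0:ℝ) ≤ ∑ k ∈ Finset.Ico m (n+1), r^(k-m) * ‖f (p.getVert k)‖ :=
          Finset.sum_nonneg fun k _ => mul_nonneg (pow_nonneg hr0 _) (norm_nonneg _)
        nlinarith [norm_nonneg (C m), pow_le_pow_left₀ (norm_nonneg (C m)) h1' 2]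
      calc ∑ m ∈ Finset.range (n+1), ‖C m‖^2
          ≤ ∑ m ∈ Finset.range (n+1),
            4 * ((1-r)⁻¹ * ∑ k ∈ Finset.Ico m (n+1), r^(k-m) * ‖f (p.getVert k)‖^2) :=
            Finset.sum_le_sum step1
        _ = 4 * ((1-r)⁻¹ * ∑ m ∈ Finset.range (n+1), ∑ k ∈ Finset.Ico m (n+1),
              r^(k-m) * ‖f (p.getVert k)‖^2) := by
            rw [← Finset.mul_sum, ← Finset.mul_sum]
        _ ≤ 4 * ((1-r)⁻¹ * ((1-r)⁻¹ * ‖f‖^2)) := by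
            have hin : ∑ m ∈ Finset.range (n+1), ∑ k ∈ Finset.Ico m (n+1),
                r^(k-m) * ‖f (p.getVert k)‖^2 ≤ (1-r)⁻¹ * ‖f‖^2 := by
              rw [hswap]
              calc ∑ k ∈ Finset.range (n+1), ∑ m ∈ Finset.range (k+1),
                    r^(k-m) * ‖f (p.getVert k)‖^2
                  ≤ ∑ k ∈ Finset.range (n+1), (1-r)⁻¹ * ‖f (p.getVert k)‖^2 :=
                    Finset.sum_le_sum hinner
                _ = (1-r)⁻¹ * ∑ k ∈ Finset.range (n+1), ‖f (p.getVert k)‖^2 := by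
                    rw [← Finset.mul_sum]
                _ ≤ (1-r)⁻¹ * ‖f‖^2 := mul_le_mul_of_nonneg_left hsumg hinvpos
            nlinarith
    refine le_of_sq_le (by positivity) ?_
    rw [hB2]
    calc ∑ m ∈ Finset.range (n+1), ‖C m‖^2
        ≤ 4 * ((1-r)⁻¹ * ((1-r)⁻¹ * ‖f‖^2)) := hBsq
      _ = (2 * (1-r)⁻¹ * ‖f‖)^2 := by ring
  -- final assembly
  calc ‖(f - ∑ k ∈ Finset.range (n+1), (f (p.getVert k)) • delta (p.getVert k))
      + ((∑ k ∈ Finset.range n, (-((f (p.getVert k)) * z)) • delta (p.getVert (k+1)))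
      + ∑ m ∈ Finset.range (n+1),
          (if m = 0 then (∑ k ∈ Finset.range n, (f (p.getVert k)) * (W z * z^k))
              + (f (p.getVert n)) * z^n
            else (W z)^2 * (∑ k ∈ Finset.Ico m n, (f (p.getVert k)) * z^(k-m))
              + (f (p.getVert n)) * (W z * z^(n-m))) • delta (p.getVert m))‖
      ≤ ‖f - ∑ k ∈ Finset.range (n+1), (f (p.getVert k)) • delta (p.getVert k)‖
        + (‖∑ k ∈ Finset.range n, (-((f (p.getVert k)) * z)) • delta (p.getVert (k+1))‖
        + ‖∑ m ∈ Finset.range (n+1),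
          (if m = 0 then (∑ k ∈ Finset.range n, (f (p.getVert k)) * (W z * z^k))
              + (f (p.getVert n)) * z^n
            else (W z)^2 * (∑ k ∈ Finset.Ico m n, (f (p.getVert k)) * z^(k-m))
              + (f (p.getVert n)) * (W z * z^(n-m))) • delta (p.getVert m)‖) := by
        refine le_trans (norm_add_le _ _) ?_
        gcongr
        exact norm_add_le _ _
    _ ≤ ‖f‖ + (‖f‖ + 2 * (1-r)⁻¹ * ‖f‖) := by gcongr
    _ ≤ 4 * (1 - r)⁻¹ * ‖f‖ := by
        nlinarith [mul_nonneg (norm_nonneg f) (sub_nonneg.mpr hinvge1)]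

lemma walkProd_norm_le (z : ℂ) (hz : ‖z‖ < 1)
    (c : X → X → (ell2 X →L[ℂ] ell2 X))
    (hedge : ∀ u v : X, T.Adj u v → IsEdgeOp z u v (c u v))
    {a b : X} (p : T.Walk a b) (hp : p.IsPath) :
    ‖walkProd c p‖ ≤ 4 * (1 - ‖z‖)⁻¹ := by
  refine ContinuousLinearMap.opNorm_le_bound _ ?_ (fun f => walkProd_norm_apply_le z hz c hedge p hp f)
  have : (0:ℝ) < 1 - ‖z‖ := by linarith
  positivity


end PZaux

/-- For every `z ∈ 𝔻` the representation `π_z` is uniformly bounded: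
`‖π_z(g)‖ ≤ 4(1 − |z|)⁻¹` for every `g ∈ G`.  In particular, for every compact subset
`K ⊆ 𝔻`, `sup { ‖π_z(g)‖ : g ∈ G, z ∈ K } < ∞`. -/
theorem pi_z_uniformly_bounded {X : Type} [DecidableEq X] (T : SimpleGraph X)
    (hconn : T.Connected) (hacyc : T.IsAcyclic)
    (c : ℂ → X → X → (ell2 X →L[ℂ] ell2 X))
    (hedge : ∀ z ∈ Metric.ball (0 : ℂ) 1, ∀ u v : X, T.Adj u v →
      IsEdgeOp z u v (c z u v))
    (hgeo : ∀ z ∈ Metric.ball (0 : ℂ) 1, ∀ u v : X, ∀ p : T.Walk u v,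
      p.length = T.dist u v → c z u v = walkProd (c z) p)
    {G : Type} [Group G] [MulAction G X]
    (hact : ∀ (g : G) (u v : X), T.Adj u v ↔ T.Adj (g • u) (g • v))
    (U : G → (ell2 X →L[ℂ] ell2 X))
    (hU : ∀ (g : G) (v : X), U g (delta v) = delta (g • v))
    (x₀ : X) :
    (∀ z ∈ Metric.ball (0 : ℂ) 1, ∀ g : G,
      ‖c z x₀ (g • x₀) * U g‖ ≤ 4 * (1 - ‖z‖)⁻¹) ∧
    (∀ K : Set ℂ, K ⊆ Metric.ball (0 : ℂ) 1 → IsCompact K →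
      ∃ M : ℝ, ∀ g : G, ∀ z ∈ K, ‖c z x₀ (g • x₀) * U g‖ ≤ M) := by
  have main : ∀ z ∈ Metric.ball (0 : ℂ) 1, ∀ g : G,
      ‖c z x₀ (g • x₀) * U g‖ ≤ 4 * (1 - ‖z‖)⁻¹ := by
    intro z hz g
    have hz' : ‖z‖ < 1 := mem_ball_zero_iff.mp hz
    have hinv1 : (0:ℝ) < 1 - ‖z‖ := by linarith
    obtain ⟨w0, hw0⟩ := hconn.exists_walk_length_eq_dist x₀ (g • x₀)
    have hpath := w0.bypass_isPath
    have hlen : w0.bypass.length = T.dist x₀ (g • x₀) :=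
      le_antisymm (hw0 ▸ w0.length_bypass_le) (SimpleGraph.dist_le _)
    have hc : c z x₀ (g • x₀) = walkProd (c z) w0.bypass := hgeo z hz x₀ (g • x₀) _ hlen
    have hcb : ‖c z x₀ (g • x₀)‖ ≤ 4 * (1 - ‖z‖)⁻¹ := by
      rw [hc]
      exact PZaux.walkProd_norm_le z hz' (c z) (fun u v h => hedge z hz u v h) w0.bypass hpath
    have hub : ‖U g‖ ≤ 1 := by
      refine ContinuousLinearMap.opNorm_le_bound _ zero_le_one ?_
      intro f
      rw [one_mul]
      exact PZaux.norm_permOp_le (fun v => g • v) (MulAction.injective g) (U g)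
        (fun v => hU g v) f
    calc ‖c z x₀ (g • x₀) * U g‖ ≤ ‖c z x₀ (g • x₀)‖ * ‖U g‖ := norm_mul_le _ _
      _ ≤ (4 * (1 - ‖z‖)⁻¹) * 1 := by
          refine mul_le_mul hcb hub (norm_nonneg _) ?_
          positivity
      _ = 4 * (1 - ‖z‖)⁻¹ := mul_one _
  refine ⟨main, ?_⟩
  intro K hK hKc
  by_cases hne : K.Nonempty
  · obtain ⟨z₀, hz₀K, hmax⟩ := hKc.exists_isMaxOn hne continuous_norm.continuousOn
    have hz₀ : ‖z₀‖ < 1 := mem_ball_zero_iff.mp (hK hz₀K)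
    refine ⟨4 * (1 - ‖z₀‖)⁻¹, fun g z hzK => ?_⟩
    have hz1 : ‖z‖ < 1 := mem_ball_zero_iff.mp (hK hzK)
    have hle : ‖z‖ ≤ ‖z₀‖ := hmax hzK
    have hmono : (1 - ‖z‖)⁻¹ ≤ (1 - ‖z₀‖)⁻¹ := by
      have h1 : (0:ℝ) < 1 - ‖z₀‖ := by linarith
      have h2 : 1 - ‖z₀‖ ≤ 1 - ‖z‖ := by linarith
      exact inv_anti₀ h1 h2
    refine le_trans (main z (hK hzK) g) ?_
    linarith
  · refine ⟨0, fun g z hzK => ?_⟩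
    exact absurd ⟨z, hzK⟩ hne
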